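/- Löwdin orthogonalization: let M, N be positive integers and let C be an M×N complex matrix whose columns are linearly independent (equivalently, CᴴC is positive definite). Define L = C · (CᴴC)^{−1/2}, where (CᴴC)^{−1/2} is the inverse of the unique positive-definite square root of CᴴC. Then LᴴL = I_N (the columns of L are orthonormal), and for every M×N complex matrix X with XᴴX = I_N one has ‖C − L‖_Fro ≤ ‖C − X‖_Fro, where ‖A‖_Fro = tr(AAᴴ)^{1/2} is the Frobenius norm. -/

import Mathlib

open Complex Matrix
open scoped ComplexOrder

/-- The Frobenius norm `‖A‖_Fro = tr(AAᴴ)^{1/2}` of a complex matrix. -/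
noncomputable def frobeniusNorm {m n : Type*} [Fintype m] [Fintype n]
    (A : Matrix m n ℂ) : ℝ :=
  Real.sqrt (Matrix.trace (A * Aᴴ)).re

/-- The positive semidefinite square root of a positive semidefinite matrix
(as defined in Mathlib of December 2024; removed from Mathlib since). -/
noncomputable def Matrix.PosSemidef.sqrt {n : Type*} [Fintype n] [DecidableEq n] {𝕜 : Type*}
    [RCLike 𝕜] {A : Matrix n n 𝕜} (hA : A.PosSemidef) : Matrix n n 𝕜 :=
  hA.1.eigenvectorUnitary.1 * diagonal ((↑) ∘ (√·) ∘ hA.1.eigenvalues) *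
  (star hA.1.eigenvectorUnitary : Matrix n n 𝕜)

lemma Matrix.PosSemidef.posSemidef_sqrt {n : Type*} [Fintype n] [DecidableEq n]
    {A : Matrix n n ℂ} (hA : A.PosSemidef) : hA.sqrt.PosSemidef := by
  unfold Matrix.PosSemidef.sqrt
  rw [show (star hA.1.eigenvectorUnitary : Matrix n n ℂ)
      = (hA.1.eigenvectorUnitary : Matrix n n ℂ)ᴴ from rfl]
  apply Matrix.PosSemidef.mul_mul_conjTranspose_same
  apply Matrix.PosSemidef.diagonal
  intro i
  exact RCLike.ofReal_nonneg.mpr (Real.sqrt_nonneg _)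

lemma Matrix.PosSemidef.sqrt_mul_self {n : Type*} [Fintype n] [DecidableEq n]
    {A : Matrix n n ℂ} (hA : A.PosSemidef) : hA.sqrt * hA.sqrt = A := by
  unfold Matrix.PosSemidef.sqrt
  have hU : (star hA.1.eigenvectorUnitary : Matrix n n ℂ) * hA.1.eigenvectorUnitary = 1 :=
    Matrix.mem_unitaryGroup_iff'.mp hA.1.eigenvectorUnitary.2
  conv_rhs => rw [hA.1.spectral_theorem, Unitary.conjStarAlgAut_apply]
  set U : Matrix n n ℂ := hA.1.eigenvectorUnitary.1
  set V : Matrix n n ℂ := star hA.1.eigenvectorUnitary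
  simp only [Matrix.mul_assoc]
  rw [← Matrix.mul_assoc V U, hU, Matrix.one_mul, ← Matrix.mul_assoc (diagonal _),
    diagonal_mul_diagonal]
  congr 3
  funext i
  simp only [Function.comp_apply]
  rw [← RCLike.ofReal_mul, Real.mul_self_sqrt (hA.eigenvalues_nonneg i)]

-- trace of a PSD complex matrix is nonneg
lemma psd_trace_nonneg {n : Type*} [Fintype n] {A : Matrix n n ℂ}
    (hA : A.PosSemidef) : 0 ≤ A.trace := by
  classical
  rw [Matrix.trace]
  refine Finset.sum_nonneg fun i _ => ?_
  have h := hA.2 (Finsupp.single i 1)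
  simpa [Matrix.mulVec, dotProduct, Pi.single_apply] using h

-- key inequality
lemma key_ineq {M N : ℕ} (L X : Matrix (Fin M) (Fin N) ℂ) (S : Matrix (Fin N) (Fin N) ℂ)
    (hS : S.PosSemidef) (hL : Lᴴ * L = 1) (hX : Xᴴ * X = 1) :
    ((L * S * Xᴴ).trace).re ≤ (S.trace).re := by
  set T := hS.sqrt with hTdef
  have hT : T.PosSemidef := hS.posSemidef_sqrt
  have hTT : T * T = S := hS.sqrt_mul_self
  set U : Matrix (Fin N) (Fin N) ℂ := Xᴴ * L with hU
  set P : Matrix (Fin M) (Fin N) ℂ := (1 - X * Xᴴ) * L with hP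
  have hPP : Pᴴ * P = 1 - Uᴴ * U := by
    simp only [hP, hU, conjTranspose_mul, conjTranspose_sub, conjTranspose_one,
      conjTranspose_conjTranspose]
    simp only [Matrix.mul_sub, Matrix.sub_mul, Matrix.mul_one, Matrix.one_mul, Matrix.mul_assoc]
    rw [show X * (Xᴴ * (X * (Xᴴ * L))) = X * ((Xᴴ * X) * (Xᴴ * L)) by
      simp only [Matrix.mul_assoc], hX]
    simp only [Matrix.one_mul, hL]
    abel
  have hK : (1 - U)ᴴ * (1 - U) + Pᴴ * P = (1 - U) + (1 - Uᴴ) := by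
    rw [hPP]
    have h1 : (1 - U)ᴴ * (1 - U) = 1 - U - Uᴴ + Uᴴ * U := by
      simp only [conjTranspose_sub, conjTranspose_one, Matrix.mul_sub, Matrix.sub_mul,
        Matrix.mul_one, Matrix.one_mul]
      abel
    rw [h1]; abel
  have hKpsd : ((1 - U)ᴴ * (1 - U) + Pᴴ * P).PosSemidef :=
    (Matrix.posSemidef_conjTranspose_mul_self _).add (Matrix.posSemidef_conjTranspose_mul_self _)
  have hKpsd' : (Tᴴ * ((1 - U) + (1 - Uᴴ)) * T).PosSemidef := by
    rw [← hK]; exact hKpsd.conjTranspose_mul_mul_same T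
  have htr : 0 ≤ ((Tᴴ * ((1 - U) + (1 - Uᴴ)) * T).trace) := psd_trace_nonneg hKpsd'
  have hTH : Tᴴ = T := hT.isHermitian
  have hSH : Sᴴ = S := hS.isHermitian
  -- compute the trace
  have hcyc : (Tᴴ * ((1 - U) + (1 - Uᴴ)) * T).trace
      = S.trace - (U * S).trace + (S.trace - (Uᴴ * S).trace) := by
    rw [hTH, Matrix.trace_mul_cycle, hTT]
    simp only [Matrix.mul_add, Matrix.mul_sub, Matrix.mul_one, trace_add, trace_sub,
      Matrix.one_mul]
    rw [trace_mul_comm S U, trace_mul_comm S Uᴴ]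
  have hUS : (U * S).trace = (L * S * Xᴴ).trace := by
    rw [hU, Matrix.mul_assoc, trace_mul_comm]
  have hUHS : ((Uᴴ * S).trace).re = ((U * S).trace).re := by
    have h2 : (Uᴴ * S).trace = star ((S * U).trace) := by
      rw [← trace_conjTranspose]
      congr 1
      conv_rhs => rw [conjTranspose_mul, hSH]
    rw [h2, trace_mul_comm]
    simp
  have h0 : 0 ≤ (S.trace - (U * S).trace + (S.trace - (Uᴴ * S).trace)).re := by
    rw [← hcyc]
    exact (Complex.le_def.mp htr).1
  simp only [Complex.add_re, Complex.sub_re, hUHS] at h0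
  rw [← hUS]
  linarith

/-- **Löwdin orthogonalization**: let `C` be an `M×N` complex matrix with linearly
independent columns (equivalently, `CᴴC` is positive definite) and let
`L = C·(CᴴC)^{−1/2}`, where `(CᴴC)^{1/2}` is the unique positive-semidefinite square root
of `CᴴC`. Then `LᴴL = 1` (the columns of `L` are orthonormal), and `L` minimizes the
Frobenius distance to `C` among all matrices `X` with orthonormal columns (`XᴴX = 1`). -/
theorem loewdin_orthogonalization (M N : ℕ) (hM : 0 < M) (hN : 0 < N)
    (C : Matrix (Fin M) (Fin N) ℂ) (hC : (Cᴴ * C).PosDef) :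
    (C * (hC.posSemidef.sqrt)⁻¹)ᴴ * (C * (hC.posSemidef.sqrt)⁻¹) = 1 ∧
      ∀ X : Matrix (Fin M) (Fin N) ℂ, Xᴴ * X = 1 →
        frobeniusNorm (C - C * (hC.posSemidef.sqrt)⁻¹) ≤ frobeniusNorm (C - X) := by
  set S := hC.posSemidef.sqrt with hSdef
  have hSps : S.PosSemidef := hC.posSemidef.posSemidef_sqrt
  have hSH : Sᴴ = S := hSps.isHermitian
  have hSS : S * S = Cᴴ * C := hC.posSemidef.sqrt_mul_self
  have hdet : IsUnit S.det := by
    have h1 : S.det * S.det = (Cᴴ * C).det := by rw [← det_mul, hSS]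
    have h2 : (Cᴴ * C).det ≠ 0 := hC.det_pos.ne'
    have : S.det ≠ 0 := by
      intro h; rw [h, mul_zero] at h1; exact h2 h1.symm
    exact this.isUnit
  have hinv1 : S⁻¹ * S = 1 := nonsing_inv_mul S hdet
  have hinv2 : S * S⁻¹ = 1 := mul_nonsing_inv S hdet
  have hSiH : (S⁻¹)ᴴ = S⁻¹ := by rw [conjTranspose_nonsing_inv, hSH]
  set L := C * S⁻¹ with hLdef
  have hL : Lᴴ * L = 1 := by
    rw [hLdef, conjTranspose_mul, hSiH]
    calc S⁻¹ * Cᴴ * (C * S⁻¹) = S⁻¹ * (Cᴴ * C) * S⁻¹ := by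
          simp only [Matrix.mul_assoc]
      _ = S⁻¹ * (S * S) * S⁻¹ := by rw [hSS]
      _ = (S⁻¹ * S) * (S * S⁻¹) := by simp only [Matrix.mul_assoc]
      _ = 1 := by rw [hinv1, hinv2, Matrix.one_mul]
  have hLS : L * S = C := by
    rw [hLdef, Matrix.mul_assoc, hinv1, Matrix.mul_one]
  refine ⟨hL, fun X hX => ?_⟩
  -- expansion of the squared Frobenius norm
  have expand : ∀ Y : Matrix (Fin M) (Fin N) ℂ, Yᴴ * Y = 1 →
      ((C - Y) * (C - Y)ᴴ).trace.re
        = ((C * Cᴴ).trace).re + N - 2 * ((L * S * Yᴴ).trace).re := by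
    intro Y hY
    have hYY : (Y * Yᴴ).trace = (N : ℂ) := by
      rw [trace_mul_comm, hY, trace_one]; simp
    have hYC : ((Y * Cᴴ).trace).re = ((C * Yᴴ).trace).re := by
      have : Y * Cᴴ = (C * Yᴴ)ᴴ := by
        rw [conjTranspose_mul, conjTranspose_conjTranspose]
      rw [this, trace_conjTranspose]; simp
    have h1 : (C - Y) * (C - Y)ᴴ = C * Cᴴ - C * Yᴴ - Y * Cᴴ + Y * Yᴴ := by
      simp only [conjTranspose_sub, Matrix.mul_sub, Matrix.sub_mul]
      abel
    rw [h1]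
    simp only [trace_add, trace_sub, Complex.add_re, Complex.sub_re, hYY, hYC, hLS]
    rw [Complex.natCast_re]
    ring
  have hXle := key_ineq L X S hSps hL hX
  have hLeq : ((L * S * Lᴴ).trace) = S.trace := by
    rw [trace_mul_comm, ← Matrix.mul_assoc, hL, Matrix.one_mul]
  have hmain : ((C - L) * (C - L)ᴴ).trace.re ≤ ((C - X) * (C - X)ᴴ).trace.re := by
    rw [expand L hL, expand X hX, hLeq]
    linarith
  unfold frobeniusNorm
  exact Real.sqrt_le_sqrt hmain
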